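/- Let d be a power of 2. There exists a hypergraph H (with hyperedge multiset) whose vertices form a complete rooted binary tree with log2(d)+1 levels, with every hyperedge a level-descending path ending at a leaf, such that the maximum vertex degree of H is at most 2d, and for every i with 0 ≤ i ≤ log2(d), every full branch contains exactly 2^i bottom hyperedges (counted with multiplicity) of size log2(d)+1−i. -/

import Mathlib

/-- The finset of all boolean lists of length `k` (nodes on level `k` of the
complete infinite rooted binary tree). -/
def listsOfLen : ℕ → Finset (List Bool)
  | 0 => {[]}
  | k+1 => (listsOfLen k).image (· ++ [true]) ∪ (listsOfLen k).image (· ++ [false])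

/-- The vertex set of the full branch (root-to-`l` path) ending at the node `l`. -/
def prefixesF (l : List Bool) : Finset (List Bool) :=
  (Finset.range (l.length + 1)).image (fun i => l.take i)

/-- The vertex set of the level-descending path starting at node `p` and
ending at node `p ++ q`. -/
def pathFinset (p q : List Bool) : Finset (List Bool) :=
  (Finset.range (q.length + 1)).image (fun i => p ++ q.take i)

/-- `S` is (the node set of) a rooted binary tree: it contains the root, is
prefix-closed, and every node has either zero or two children. -/
def IsBinTree (S : Finset (List Bool)) : Prop :=
  [] ∈ S ∧ (∀ l ∈ S, ∀ p : List Bool, p <+: l → p ∈ S) ∧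
    ∀ l ∈ S, ((l ++ [true]) ∈ S ↔ (l ++ [false]) ∈ S)

/-- `l` is a leaf of the tree `S`. -/
def IsLeaf (S : Finset (List Bool)) (l : List Bool) : Prop :=
  l ∈ S ∧ (l ++ [true]) ∉ S ∧ (l ++ [false]) ∉ S

/-- The edge `e` is a level-descending path inside the tree `S`. -/
def InTree (S : Finset (List Bool)) (e : Finset (List Bool)) : Prop :=
  ∃ p q : List Bool, (p ++ q) ∈ S ∧ e = pathFinset p q

/-- Degree of vertex `v` in a hypergraph with hyperedge multiset `E`
(counted with multiplicity). -/
def mDegree (E : Multiset (Finset (List Bool))) (v : List Bool) : ℕ :=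
  Multiset.countP (fun e => v ∈ e) E

/-- The number (with multiplicity) of bottom hyperedges of size `L` of the full
branch ending at the leaf `l`: hyperedges contained in the branch and ending at `l`. -/
def bottomCount (E : Multiset (Finset (List Bool))) (l : List Bool) (L : ℕ) : ℕ :=
  Multiset.countP (fun e => l ∈ e ∧ e ⊆ prefixesF l ∧ e.card = L) E

/-- With `d = 2^m`, the full branch ending at leaf `l` contains bottom units of
power `k` whose multiset of lengths is `ls`: a unit of power `k` and length `L`
consists of `2^(m+1+k-L)` hyperedges of size `L` ending at `l`. -/
def HasBottomUnits (m k : ℕ) (E : Multiset (Finset (List Bool))) (l : List Bool)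
    (ls : Multiset ℕ) : Prop :=
  (∀ L ∈ ls, k ≤ L ∧ L ≤ m + 1 + k) ∧
  ∀ L : ℕ, ls.count L * 2 ^ (m + 1 + k - L) ≤ bottomCount E l L

lemma mem_listsOfLen {k : ℕ} {l : List Bool} : l ∈ listsOfLen k ↔ l.length = k := by
  induction k generalizing l with
  | zero => simp [listsOfLen, List.length_eq_zero_iff]
  | succ k ih =>
    simp only [listsOfLen, Finset.mem_union, Finset.mem_image]
    constructor
    · rintro (⟨a, ha, rfl⟩ | ⟨a, ha, rfl⟩) <;> simp [ih.1 ha]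
    · intro h
      rcases List.eq_nil_or_concat l with rfl | ⟨a, b, rfl⟩
      · simp at h
      · have ha : a.length = k := by simpa [List.concat_eq_append] using h
        cases b
        · right; exact ⟨a, ih.2 ha, by simp [List.concat_eq_append]⟩
        · left; exact ⟨a, ih.2 ha, by simp [List.concat_eq_append]⟩

lemma card_listsOfLen (k : ℕ) : (listsOfLen k).card = 2 ^ k := by
  induction k with
  | zero => simp [listsOfLen]
  | succ k ih =>
    have hinj : ∀ b : Bool, Function.Injective (fun l : List Bool => l ++ [b]) :=
      fun b a c h => List.append_cancel_right h
    have hd : Disjoint ((listsOfLen k).image (· ++ [true]))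
        ((listsOfLen k).image (· ++ [false])) := by
      simp only [Finset.disjoint_left, Finset.mem_image]
      rintro x ⟨a, _, rfl⟩ ⟨c, _, h⟩
      have := List.append_inj_right h (by
        have := congrArg List.length h; simpa using this)
      simp at this
    rw [listsOfLen, Finset.card_union_of_disjoint hd,
      Finset.card_image_of_injective _ (hinj true),
      Finset.card_image_of_injective _ (hinj false), ih]
    ring

lemma mem_pathFinset {p q v : List Bool} :
    v ∈ pathFinset p q ↔ ∃ t, t ≤ q.length ∧ v = p ++ q.take t := by
  simp [pathFinset, Nat.lt_succ_iff, eq_comm]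

lemma mem_prefixesF {l v : List Bool} :
    v ∈ prefixesF l ↔ ∃ s, s ≤ l.length ∧ v = l.take s := by
  simp [prefixesF, Nat.lt_succ_iff, eq_comm]

lemma card_pathFinset (p q : List Bool) : (pathFinset p q).card = q.length + 1 := by
  rw [pathFinset, Finset.card_image_of_injOn, Finset.card_range]
  intro i hi j hj h
  simp only [Finset.coe_range, Set.mem_Iio, Nat.lt_succ_iff] at hi hj
  have := congrArg List.length h
  simpa [Nat.min_eq_left hi, Nat.min_eq_left hj] using this

lemma countP_finsetSum {α β : Type*} (pred : β → Prop) [DecidablePred pred]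
    (s : Finset α) (f : α → Multiset β) :
    Multiset.countP pred (∑ x ∈ s, f x) = ∑ x ∈ s, Multiset.countP pred (f x) := by
  classical
  induction s using Finset.induction_on with
  | empty => simp
  | insert _ _ h ih => rw [Finset.sum_insert h, Finset.sum_insert h, Multiset.countP_add, ih]

lemma countP_replicate {α : Type*} (pred : α → Prop) [DecidablePred pred]
    (n : ℕ) (a : α) :
    Multiset.countP pred (Multiset.replicate n a) = if pred a then n else 0 := by
  induction n with
  | zero => simp
  | succ n ih =>
    rw [Multiset.replicate_succ, Multiset.countP_cons]
    split <;> simp_all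

/-- The hypergraph: for each level `j ≤ m`, each node `p` at level `j` and each
descent `q` to a leaf, the path from `p` to `p ++ q`, with multiplicity `2^j`. -/
def Eh (m : ℕ) : Multiset (Finset (List Bool)) :=
  ∑ j ∈ Finset.range (m+1), ∑ pq ∈ (listsOfLen j ×ˢ listsOfLen (m-j)),
    Multiset.replicate (2^j) (pathFinset pq.1 pq.2)

lemma countP_Eh (m : ℕ) (pred : Finset (List Bool) → Prop) [DecidablePred pred] :
    Multiset.countP pred (Eh m) =
      ∑ j ∈ Finset.range (m+1),
        ((listsOfLen j ×ˢ listsOfLen (m-j)).filter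
          (fun pq => pred (pathFinset pq.1 pq.2))).card * 2^j := by
  rw [Eh, countP_finsetSum]
  refine Finset.sum_congr rfl fun j _ => ?_
  rw [countP_finsetSum]
  rw [Finset.sum_congr rfl (fun pq _ => countP_replicate pred (2^j) (pathFinset pq.1 pq.2))]
  rw [Finset.sum_ite, Finset.sum_const, Finset.sum_const_zero, add_zero, smul_eq_mul]

lemma sum_two_pow (n : ℕ) : ∑ j ∈ Finset.range n, 2^j = 2^n - 1 := by
  induction n with
  | zero => simp
  | succ n ih =>
    rw [Finset.sum_range_succ, ih]
    have := Nat.one_le_two_pow (n := n)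
    omega

lemma bottom_filter {m i : ℕ} (hi : i ≤ m) {l : List Bool} (hl : l.length = m)
    {j : ℕ} (hj : j ≤ m) :
    ((listsOfLen j ×ˢ listsOfLen (m-j)).filter
      (fun pq => l ∈ pathFinset pq.1 pq.2 ∧ pathFinset pq.1 pq.2 ⊆ prefixesF l ∧
        (pathFinset pq.1 pq.2).card = m+1-i))
      = if j = i then {(l.take i, l.drop i)} else ∅ := by
  ext ⟨p, q⟩
  by_cases hji : j = i
  · subst hji
    rw [if_pos rfl]
    simp only [Finset.mem_filter, Finset.mem_product, mem_listsOfLen, card_pathFinset,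
      Finset.mem_singleton, Prod.mk.injEq]
    constructor
    · rintro ⟨⟨hp, hq⟩, hmem, hsub, hcard⟩
      obtain ⟨t, ht, hv⟩ := mem_pathFinset.1 hmem
      have hlen := congrArg List.length hv
      simp only [List.length_append, List.length_take, hp, hq, hl,
        Nat.min_eq_left ht] at hlen
      have htq : t = q.length := by omega
      rw [htq, List.take_length] at hv
      subst hv
      exact ⟨(List.take_left' hp).symm, (List.drop_left' hp).symm⟩
    · rintro ⟨rfl, rfl⟩
      refine ⟨⟨by simp; omega, by simp [hl]⟩, ?_, ?_, by simp [hl]; omega⟩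
      · exact mem_pathFinset.2 ⟨(l.drop j).length, le_rfl,
          by rw [List.take_length, List.take_append_drop]⟩
      · intro v hv
        obtain ⟨t, ht, rfl⟩ := mem_pathFinset.1 hv
        rw [← List.take_add]
        exact mem_prefixesF.2 ⟨j + t, by simp at ht; omega, rfl⟩
  · rw [if_neg hji]
    simp only [Finset.notMem_empty, iff_false, Finset.mem_filter, Finset.mem_product,
      mem_listsOfLen, card_pathFinset, not_and]
    rintro ⟨hp, hq⟩ hmem hsub hcard
    omega

lemma deg_filter {m j : ℕ} (hj : j ≤ m) (v : List Bool) :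
    ((listsOfLen j ×ˢ listsOfLen (m-j)).filter
      (fun pq => v ∈ pathFinset pq.1 pq.2)).card
      ≤ if j ≤ v.length ∧ v.length ≤ m then 2^(m - v.length) else 0 := by
  set s := v.length with hs
  have key : ∀ pq ∈ (listsOfLen j ×ˢ listsOfLen (m-j)).filter
      (fun pq => v ∈ pathFinset pq.1 pq.2),
      j ≤ s ∧ s ≤ m ∧ pq.1 = v.take j ∧ pq.2 = v.drop j ++ pq.2.drop (s - j) := by
    rintro ⟨p, q⟩ hpq
    simp only [Finset.mem_filter, Finset.mem_product, mem_listsOfLen] at hpq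
    obtain ⟨⟨hp, hq⟩, hmem⟩ := hpq
    obtain ⟨t, ht, hv⟩ := mem_pathFinset.1 hmem
    rw [hq] at ht
    have hlen := congrArg List.length hv
    simp only [List.length_append, List.length_take, hp, hq,
      Nat.min_eq_left (hq ▸ ht : t ≤ q.length)] at hlen
    have h1 : j ≤ s := by omega
    have h2 : s ≤ m := by omega
    have htsj : t = s - j := by omega
    have hpv : p = v.take j := by rw [hv, List.take_left' hp]
    have hqv : q.take (s - j) = v.drop j := by
      rw [hv, List.drop_left' hp, htsj]
    refine ⟨h1, h2, hpv, ?_⟩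
    conv_lhs => rw [← List.take_append_drop (s - j) q, hqv]
  by_cases h : j ≤ s ∧ s ≤ m
  · rw [if_pos h]
    rw [← card_listsOfLen (m - s)]
    apply Finset.card_le_card_of_injOn (fun pq => pq.2.drop (s - j))
    · rintro ⟨p, q⟩ hpq
      have hq : q.length = m - j := by
        simp only [Finset.mem_coe, Finset.mem_filter, Finset.mem_product, mem_listsOfLen] at hpq
        exact hpq.1.2
      rw [Finset.mem_coe, mem_listsOfLen]
      simp only [List.length_drop, hq]
      omega
    · rintro ⟨p, q⟩ h1 ⟨p', q'⟩ h2 heq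
      obtain ⟨_, _, hpv, hqv⟩ := key (p, q) (Finset.mem_coe.1 h1)
      obtain ⟨_, _, hpv', hqv'⟩ := key (p', q') (Finset.mem_coe.1 h2)
      simp only at hpv hqv hpv' hqv' heq
      ext : 1
      · simp [hpv, hpv']
      · simp only
        rw [hqv, hqv', heq]
  · rw [if_neg h]
    rw [Nat.le_zero, Finset.card_eq_zero, Finset.eq_empty_iff_forall_notMem]
    intro pq hpq
    obtain ⟨h1, h2, -, -⟩ := key _ hpq
    exact h ⟨h1, h2⟩

/-- With `d = 2^m` a power of 2, there is a hypergraph (with hyperedge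
multiplicities) on the complete binary tree with `m+1` levels, all hyperedges
level-descending paths ending at a leaf, with maximum degree at most `2d`, such
that for each `i ≤ m` every full branch contains exactly `2^i` bottom hyperedges
of size `m + 1 - i`. -/
theorem unit_tree_exists (m : ℕ) :
    ∃ E : Multiset (Finset (List Bool)),
      (∀ e ∈ E, ∃ p q : List Bool, (p ++ q).length = m ∧ e = pathFinset p q) ∧
      (∀ v : List Bool, mDegree E v ≤ 2 * 2 ^ m) ∧
      (∀ l ∈ listsOfLen m, ∀ i ≤ m, bottomCount E l (m + 1 - i) = 2 ^ i) := by
  classical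
  refine ⟨Eh m, ?_, ?_, ?_⟩
  · intro e he
    rw [Eh, Multiset.mem_sum] at he
    obtain ⟨j, hj, he⟩ := he
    rw [Multiset.mem_sum] at he
    obtain ⟨⟨p, q⟩, hpq, he⟩ := he
    simp only [Finset.mem_product, mem_listsOfLen] at hpq
    refine ⟨p, q, ?_, Multiset.eq_of_mem_replicate he⟩
    simp only [List.length_append, hpq.1, hpq.2]
    simp only [Finset.mem_range] at hj
    omega
  · intro v
    rw [show mDegree (Eh m) v = Multiset.countP (fun e => v ∈ e) (Eh m) from rfl,
      countP_Eh]
    set s := v.length with hs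
    calc ∑ j ∈ Finset.range (m+1),
          ((listsOfLen j ×ˢ listsOfLen (m-j)).filter
            (fun pq => v ∈ pathFinset pq.1 pq.2)).card * 2^j
        ≤ ∑ j ∈ Finset.range (m+1),
            (if j ≤ s ∧ s ≤ m then 2^(m - s) else 0) * 2^j := by
          refine Finset.sum_le_sum fun j hj => Nat.mul_le_mul_right _ ?_
          exact deg_filter (by simp only [Finset.mem_range] at hj; omega) v
      _ ≤ 2 * 2^m := by
          by_cases hsm : s ≤ m
          · have hrw : ∀ j, (if j ≤ s ∧ s ≤ m then 2^(m - s) else 0) * 2^j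
                = if j ≤ s then 2^(m - s) * 2^j else 0 := by
              intro j; split_ifs with h1 h2 h3 <;> simp_all <;> omega
            rw [Finset.sum_congr rfl fun j _ => hrw j, ← Finset.sum_filter]
            have hfil : (Finset.range (m+1)).filter (· ≤ s) = Finset.range (s+1) := by
              ext j; simp only [Finset.mem_filter, Finset.mem_range]; omega
            rw [hfil, ← Finset.mul_sum, sum_two_pow]
            calc 2^(m-s) * (2^(s+1) - 1) ≤ 2^(m-s) * 2^(s+1) :=
                  Nat.mul_le_mul_left _ (Nat.sub_le _ _)
              _ = 2 * 2^m := by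
                  rw [← pow_add, show m - s + (s+1) = m + 1 by omega, pow_succ]
                  ring
          · rw [Finset.sum_eq_zero fun j _ => by
              rw [if_neg (by tauto), zero_mul]]
            exact Nat.zero_le _
  · intro l hl i hi
    have hl' : l.length = m := mem_listsOfLen.1 hl
    rw [show bottomCount (Eh m) l (m+1-i)
        = Multiset.countP
            (fun e => l ∈ e ∧ e ⊆ prefixesF l ∧ e.card = m+1-i) (Eh m) from rfl,
      countP_Eh]
    have step : ∀ j ∈ Finset.range (m+1),
        ((listsOfLen j ×ˢ listsOfLen (m-j)).filter
          (fun pq => l ∈ pathFinset pq.1 pq.2 ∧ pathFinset pq.1 pq.2 ⊆ prefixesF l ∧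
            (pathFinset pq.1 pq.2).card = m+1-i)).card * 2^j
          = (if j = i then 2^j else 0) := by
      intro j hj
      simp only [Finset.mem_range] at hj
      rw [bottom_filter hi hl' (by omega)]
      split_ifs with h
      · simp
      · simp
    rw [Finset.sum_congr rfl step, Finset.sum_ite_eq' (Finset.range (m+1)) i (fun j => 2^j),
      if_pos (Finset.mem_range.2 (by omega))]
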